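/- Let m ≥ 1 and let z be a formal variable. Define the formal power series F(t) in t implicitly by the substitution t = z·exp(-m(m+1)z) applied to (1 - mz)·exp((m+1)z). Then for all n ≥ 1, n! times the coefficient of t^n in F equals (m+1)^n (mn+1)^{n-2}. -/

import Mathlib

open PowerSeries

/-- The exponential `exp f` of a formal power series `f` with zero constant term:
`coeff n (exp f) = ∑_{k ≤ n} coeff n (f^k) / k!` (all higher terms vanish since
`f^k` has valuation `≥ k`). -/
noncomputable def pexp (f : PowerSeries ℚ) : PowerSeries ℚ :=
  PowerSeries.mk fun n =>
    ∑ k ∈ Finset.range (n + 1), ((k.factorial : ℚ))⁻¹ * PowerSeries.coeff (R := ℚ) n (f ^ k)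

namespace PexpAux

open Finset

lemma coeff_pexp (f : PowerSeries ℚ) (n : ℕ) :
    coeff (R := ℚ) n (pexp f) = ∑ k ∈ range (n + 1), ((k.factorial : ℚ))⁻¹ * coeff (R := ℚ) n (f ^ k) := by
  simp [pexp]

lemma coeff_pow_eq_zero {f : PowerSeries ℚ} (hf : constantCoeff (R := ℚ) f = 0)
    {k j : ℕ} (h : j < k) : coeff (R := ℚ) j (f ^ k) = 0 := by
  have : (X : PowerSeries ℚ) ^ k ∣ f ^ k := pow_dvd_pow_of_dvd (X_dvd_iff.mpr hf) k
  exact X_pow_dvd_iff.mp this j h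

lemma coeff_pexp_trunc {f : PowerSeries ℚ} (hf : constantCoeff (R := ℚ) f = 0)
    {n N : ℕ} (hn : n ≤ N) :
    coeff (R := ℚ) n (pexp f) = ∑ k ∈ range (N + 1), ((k.factorial : ℚ))⁻¹ * coeff (R := ℚ) n (f ^ k) := by
  rw [coeff_pexp]
  apply Finset.sum_subset (by intro x hx; simp only [mem_range] at *; omega)
  intro k hk hk2
  simp only [mem_range] at hk hk2
  rw [coeff_pow_eq_zero hf (by omega), mul_zero]

lemma constantCoeff_pexp (f : PowerSeries ℚ) : constantCoeff (R := ℚ) (pexp f) = 1 := by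
  rw [← coeff_zero_eq_constantCoeff_apply, coeff_pexp]
  simp

lemma derivative_pexp {f : PowerSeries ℚ} (hf : constantCoeff (R := ℚ) f = 0) :
    d⁄dX ℚ (pexp f) = d⁄dX ℚ f * pexp f := by
  ext n
  have hterm : ∀ k : ℕ, coeff (R := ℚ) n (d⁄dX ℚ f * f ^ k)
      = ((n : ℚ) + 1) * ((k : ℚ) + 1)⁻¹ * coeff (R := ℚ) (n + 1) (f ^ (k + 1)) := by
    intro k
    have hk : ((k : ℚ) + 1) ≠ 0 := by positivity
    have hl := Derivation.leibniz_pow (d⁄dX ℚ) (a := f) (k + 1)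
    rw [Nat.add_sub_cancel, smul_eq_mul] at hl
    have h3 : coeff (R := ℚ) (n + 1) (f ^ (k + 1)) * ((n : ℚ) + 1)
        = ((k : ℚ) + 1) * coeff (R := ℚ) n (f ^ k * d⁄dX ℚ f) := by
      rw [← coeff_derivative, hl, map_nsmul, nsmul_eq_mul]
      push_cast
      ring
    rw [mul_comm (d⁄dX ℚ f) (f ^ k)]
    field_simp
    linarith [h3]
  have hL : coeff (R := ℚ) n (d⁄dX ℚ (pexp f))
      = ((n : ℚ) + 1) * ∑ k ∈ range (n + 1),
          (((k + 1).factorial : ℚ))⁻¹ * coeff (R := ℚ) (n + 1) (f ^ (k + 1)) := by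
    rw [coeff_derivative, coeff_pexp, Finset.sum_range_succ']
    rw [pow_zero, coeff_one, if_neg (Nat.succ_ne_zero n)]
    push_cast
    ring
  have hR : coeff (R := ℚ) n (d⁄dX ℚ f * pexp f)
      = ∑ k ∈ range (n + 1), ((k.factorial : ℚ))⁻¹ * coeff (R := ℚ) n (d⁄dX ℚ f * f ^ k) := by
    rw [coeff_mul]
    have : ∀ p ∈ antidiagonal n, coeff (R := ℚ) p.1 (d⁄dX ℚ f) * coeff (R := ℚ) p.2 (pexp f)
        = ∑ k ∈ range (n + 1), ((k.factorial : ℚ))⁻¹ *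
            (coeff (R := ℚ) p.1 (d⁄dX ℚ f) * coeff (R := ℚ) p.2 (f ^ k)) := by
      intro p hp
      rw [Finset.HasAntidiagonal.mem_antidiagonal] at hp
      rw [coeff_pexp_trunc hf (show p.2 ≤ n by omega), mul_sum]
      exact Finset.sum_congr rfl fun k _ => by ring
    rw [Finset.sum_congr rfl this, Finset.sum_comm]
    exact Finset.sum_congr rfl fun k _ => by rw [coeff_mul, mul_sum]
  rw [hL, hR, Finset.mul_sum]
  apply Finset.sum_congr rfl
  intro k _
  rw [hterm k, Nat.factorial_succ]
  have hk : ((k : ℚ) + 1) ≠ 0 := by positivity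
  have hkf : ((k.factorial : ℚ)) ≠ 0 := Nat.cast_ne_zero.2 (Nat.factorial_ne_zero _)
  push_cast
  field_simp

lemma ode_unique {h u v : PowerSeries ℚ} (hu : d⁄dX ℚ u = h * u) (hv : d⁄dX ℚ v = h * v)
    (h0 : constantCoeff (R := ℚ) u = constantCoeff (R := ℚ) v) : u = v := by
  ext n
  induction n using Nat.strong_induction_on with
  | _ n ih =>
    match n with
    | 0 => rw [coeff_zero_eq_constantCoeff_apply, coeff_zero_eq_constantCoeff_apply, h0]
    | (n + 1) =>
      have hu' := congrArg (coeff (R := ℚ) n) hu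
      have hv' := congrArg (coeff (R := ℚ) n) hv
      rw [coeff_derivative, coeff_mul] at hu' hv'
      have hs : ∑ p ∈ antidiagonal n, coeff (R := ℚ) p.1 h * coeff (R := ℚ) p.2 u
          = ∑ p ∈ antidiagonal n, coeff (R := ℚ) p.1 h * coeff (R := ℚ) p.2 v := by
        apply Finset.sum_congr rfl
        intro p hp
        rw [Finset.HasAntidiagonal.mem_antidiagonal] at hp
        rw [ih p.2 (by omega)]
      have hne : ((n : ℚ) + 1) ≠ 0 := by positivity
      exact mul_right_cancel₀ hne (hu'.trans (hs.trans hv'.symm))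

lemma pexp_mul {f g : PowerSeries ℚ} (hf : constantCoeff (R := ℚ) f = 0)
    (hg : constantCoeff (R := ℚ) g = 0) : pexp f * pexp g = pexp (f + g) := by
  have hfg : constantCoeff (R := ℚ) (f + g) = 0 := by rw [map_add, hf, hg, add_zero]
  apply ode_unique (h := d⁄dX ℚ f + d⁄dX ℚ g)
  · rw [Derivation.leibniz, smul_eq_mul, smul_eq_mul, derivative_pexp hf, derivative_pexp hg]
    ring
  · rw [derivative_pexp hfg, map_add]
  · rw [map_mul, constantCoeff_pexp, constantCoeff_pexp, constantCoeff_pexp, one_mul]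

/-- The Abel-type coefficients. -/
noncomputable def phi (a c : ℚ) : ℕ → ℚ
  | 0 => 1
  | (n + 1) => c * (c + a * (n + 1)) ^ n * (((n + 1).factorial : ℚ))⁻¹

lemma phi_zero (a c : ℚ) : phi a c 0 = 1 := rfl

lemma phi_succ (a c : ℚ) (n : ℕ) :
    phi a c (n + 1) = c * (c + a * ((n : ℚ) + 1)) ^ n * (((n + 1).factorial : ℚ))⁻¹ := rfl

lemma main_coeff (a : ℚ) (z : PowerSeries ℚ) (hz0 : constantCoeff (R := ℚ) z = 0)
    (hz : z = X * pexp (a • z)) :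
    ∀ n : ℕ, ∀ c : ℚ, coeff (R := ℚ) n (pexp (c • z)) = phi a c n
      ∧ coeff (R := ℚ) n (d⁄dX ℚ z * pexp (c • z))
          = (c + a * (n + 1)) ^ n * ((n.factorial : ℚ))⁻¹ := by
  have hzc : ∀ c : ℚ, constantCoeff (R := ℚ) (c • z) = 0 := fun c => by
    rw [← coeff_zero_eq_constantCoeff_apply, coeff_smul, coeff_zero_eq_constantCoeff_apply,
      hz0, smul_zero]
  have hmulH : ∀ b c : ℚ, pexp (b • z) * pexp (c • z) = pexp ((b + c) • z) := by
    intro b c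
    rw [pexp_mul (hzc b) (hzc c), ← add_smul]
  have hdz : d⁄dX ℚ z = pexp (a • z) + a • (X * (d⁄dX ℚ z * pexp (a • z))) := by
    conv_lhs => rw [hz]
    rw [Derivation.leibniz, derivative_pexp (hzc a), Derivation.map_smul, derivative_X,
      smul_eq_mul, smul_eq_mul, mul_one]
    rw [smul_mul_assoc, mul_smul_comm]
    exact add_comm _ _
  have hD : ∀ c : ℚ, d⁄dX ℚ z * pexp (c • z)
      = pexp ((a + c) • z) + a • (X * (d⁄dX ℚ z * pexp ((a + c) • z))) := by
    intro c
    conv_lhs => rw [hdz]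
    rw [add_mul, hmulH a c, smul_mul_assoc, mul_assoc, mul_assoc, hmulH a c]
  intro n
  induction n using Nat.strong_induction_on with
  | _ n ih =>
    have part1 : ∀ c : ℚ, coeff (R := ℚ) n (pexp (c • z)) = phi a c n := by
      intro c
      match n, ih with
      | 0, _ => rw [coeff_zero_eq_constantCoeff_apply, constantCoeff_pexp, phi_zero]
      | (k + 1), ih =>
        have hkf : ((k.factorial : ℚ)) ≠ 0 := Nat.cast_ne_zero.2 (Nat.factorial_ne_zero _)
        have hk1 : ((k : ℚ) + 1) ≠ 0 := by positivity
        have hd := congrArg (coeff (R := ℚ) k) (derivative_pexp (hzc c))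
        rw [coeff_derivative, Derivation.map_smul, smul_mul_assoc, coeff_smul, smul_eq_mul,
          (ih k (by omega) c).2] at hd
        have h2 : coeff (R := ℚ) (k + 1) (pexp (c • z))
            = c * ((c + a * ((k : ℚ) + 1)) ^ k * ((k.factorial : ℚ))⁻¹) / ((k : ℚ) + 1) := by
          rw [eq_div_iff hk1]
          exact hd
        rw [h2, phi_succ, show (((k + 1).factorial : ℚ))⁻¹
            = ((k.factorial : ℚ))⁻¹ / ((k : ℚ) + 1) from by
          rw [Nat.factorial_succ]; push_cast; rw [mul_inv]; ring]
        ring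
    refine fun c => ⟨part1 c, ?_⟩
    rw [hD c]
    rw [map_add, coeff_smul, smul_eq_mul, part1 (a + c)]
    match n, ih with
    | 0, _ =>
      have h0 : coeff (R := ℚ) 0 (X * (d⁄dX ℚ z * pexp ((a + c) • z))) = 0 := by
        rw [coeff_zero_eq_constantCoeff_apply, map_mul, constantCoeff_X, zero_mul]
      rw [h0, mul_zero, add_zero, phi_zero]
      norm_num
    | (k + 1), ih =>
      have hkf : ((k.factorial : ℚ)) ≠ 0 := Nat.cast_ne_zero.2 (Nat.factorial_ne_zero _)
      have hk1 : ((k : ℚ) + 1) ≠ 0 := by positivity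
      rw [coeff_succ_X_mul, (ih k (by omega) (a + c)).2, phi_succ, Nat.factorial_succ]
      push_cast
      field_simp
      ring

end PexpAux

theorem stmt_9 (m : ℕ) (hm : 1 ≤ m) (z : PowerSeries ℚ)
    (hz0 : PowerSeries.constantCoeff (R := ℚ) z = 0)
    (hz : z = PowerSeries.X * pexp (((m * (m + 1) : ℕ) : ℚ) • z)) :
    ∀ n : ℕ, 1 ≤ n →
      (n.factorial : ℚ) *
          PowerSeries.coeff (R := ℚ) n ((1 - (m : ℚ) • z) * pexp ((((m : ℚ) + 1)) • z))
        = ((m : ℚ) + 1) ^ n * ((m * n + 1 : ℕ) : ℚ) ^ ((n : ℤ) - 2) := by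
  intro n hn
  have hz' : z = PowerSeries.X * pexp ((((m : ℚ) * ((m : ℚ) + 1))) • z) := by
    conv_lhs => rw [hz]
    rw [show ((m * (m + 1) : ℕ) : ℚ) = (m : ℚ) * ((m : ℚ) + 1) from by push_cast; ring]
  have key := PexpAux.main_coeff ((m : ℚ) * ((m : ℚ) + 1)) z hz0 hz'
  have hzc : ∀ c : ℚ, PowerSeries.constantCoeff (R := ℚ) (c • z) = 0 := fun c => by
    rw [← PowerSeries.coeff_zero_eq_constantCoeff_apply, PowerSeries.coeff_smul,
      PowerSeries.coeff_zero_eq_constantCoeff_apply, hz0, smul_zero]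
  have hzH : z * pexp (((m : ℚ) + 1) • z)
      = PowerSeries.X * pexp ((((m : ℚ) * ((m : ℚ) + 1)) + ((m : ℚ) + 1)) • z) := by
    nth_rewrite 1 [hz']
    rw [mul_assoc, PexpAux.pexp_mul (hzc _) (hzc _), ← add_smul]
  have hexp : (1 - (m : ℚ) • z) * pexp (((m : ℚ) + 1) • z)
      = pexp (((m : ℚ) + 1) • z)
        - (m : ℚ) • (PowerSeries.X * pexp ((((m : ℚ) * ((m : ℚ) + 1)) + ((m : ℚ) + 1)) • z)) := by
    rw [sub_mul, one_mul, smul_mul_assoc, hzH]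
  rw [hexp, map_sub, PowerSeries.coeff_smul, smul_eq_mul]
  obtain ⟨k, rfl⟩ : ∃ k, n = k + 1 := ⟨n - 1, by omega⟩
  rw [PowerSeries.coeff_succ_X_mul, (key (k + 1) ((m : ℚ) + 1)).1, PexpAux.phi_succ,
    (key k (((m : ℚ) * ((m : ℚ) + 1)) + ((m : ℚ) + 1))).1]
  match k with
  | 0 =>
    rw [PexpAux.phi_zero]
    have h1 : ((m * (0 + 1) + 1 : ℕ) : ℚ) = (m : ℚ) + 1 := by push_cast; ring
    have h2 : (((0 + 1 : ℕ) : ℤ)) - 2 = -1 := by norm_num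
    have hM1 : ((m : ℚ)) + 1 ≠ 0 := by positivity
    rw [h1, h2, zpow_neg_one]
    field_simp
    simp only [zero_add, Nat.factorial_one, Nat.cast_one]
    ring
  | (j + 1) =>
    rw [PexpAux.phi_succ]
    have hb1 : (m : ℚ) + 1 + (m : ℚ) * ((m : ℚ) + 1) * (((j + 1 : ℕ) : ℚ) + 1)
        = ((m : ℚ) + 1) * ((m : ℚ) * ((j : ℚ) + 2) + 1) := by push_cast; ring
    have hb2 : (m : ℚ) * ((m : ℚ) + 1) + ((m : ℚ) + 1)
          + (m : ℚ) * ((m : ℚ) + 1) * (((j : ℕ) : ℚ) + 1)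
        = ((m : ℚ) + 1) * ((m : ℚ) * ((j : ℚ) + 2) + 1) := by push_cast; ring
    have hQ : ((m * (j + 1 + 1) + 1 : ℕ) : ℚ) = (m : ℚ) * ((j : ℚ) + 2) + 1 := by
      push_cast; ring
    have hE : (((j + 1 + 1 : ℕ) : ℤ)) - 2 = ((j : ℕ) : ℤ) := by push_cast; ring
    rw [hb1, hb2, hQ, hE, zpow_natCast]
    have hf1 : (((j + 1 + 1).factorial : ℕ) : ℚ)
        = ((j : ℚ) + 2) * (((j : ℚ) + 1) * (j.factorial : ℚ)) := by
      rw [Nat.factorial_succ, Nat.factorial_succ]; push_cast; ring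
    have hf2 : (((j + 1).factorial : ℕ) : ℚ) = ((j : ℚ) + 1) * (j.factorial : ℚ) := by
      rw [Nat.factorial_succ]; push_cast; ring
    rw [hf1, hf2, mul_pow, mul_pow]
    have hjf : (j.factorial : ℚ) ≠ 0 := Nat.cast_ne_zero.2 (Nat.factorial_ne_zero _)
    have hj1 : ((j : ℚ) + 1) ≠ 0 := by positivity
    have hj2 : ((j : ℚ) + 2) ≠ 0 := by positivity
    field_simp
    ring
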